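/- arXiv:2304.08208 — 7 statements merged into one kernel-verified Lean document; each statement's English description precedes it below -/
import Mathlib

section
/- Let 0 < α < 1, let f : ℝ → ℝ be any function, and let x : ℕ → ℝ satisfy x(t+1) = x(0) + Σ_{j=0}^{t} [Γ(t−j+α)/(Γ(α)·Γ(t−j+1))]·(f(x(j)) − x(j)) for all t ≥ 0. If there exist real numbers u, v such that x(2k) = u and x(2k+1) = v for all k ≥ 0 (i.e., {u,v} is an exactly period-2 orbit), then u = v. In other words, the fractional-order system cannot have a genuine period-2 orbit. -/
open Real Finset

/-- The fractional-order discrete system of order `α ∈ (0,1)` associated with `f`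
cannot have a genuine period-2 orbit: if the trajectory takes value `u` at all even
times and `v` at all odd times, then `u = v`. -/
theorem no_period_two_orbit (α : ℝ) (hα0 : 0 < α) (hα1 : α < 1) (f : ℝ → ℝ) (x : ℕ → ℝ)
    (hx : ∀ t : ℕ, x (t + 1) = x 0 + ∑ j ∈ Finset.range (t + 1),
      Real.Gamma (((t - j : ℕ) : ℝ) + α) /
        (Real.Gamma α * Real.Gamma (((t - j : ℕ) : ℝ) + 1)) * (f (x j) - x j))
    (u v : ℝ) (hper : ∀ k : ℕ, x (2 * k) = u ∧ x (2 * k + 1) = v) :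
    u = v := by
  obtain ⟨hx0, hx1⟩ := hper 0
  obtain ⟨hx2, hx3⟩ := hper 1
  simp only [Nat.mul_zero, Nat.mul_one] at hx0 hx1 hx2 hx3
  have h0 := hx 0
  have h1 := hx 1
  have h2 := hx 2
  simp only [Finset.sum_range_succ, Finset.sum_range_zero, Nat.sub_self, Nat.sub_zero,
    Nat.cast_zero, Nat.cast_one, Nat.cast_ofNat, zero_add] at h0 h1 h2
  norm_num at h0 h1 h2
  rw [hx0, hx1] at h0
  rw [hx0, hx1, hx2] at h1
  rw [hx0, hx1, hx2, hx3] at h2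
  have hgpos : 0 < Real.Gamma α := Real.Gamma_pos_of_pos hα0
  have hg : Real.Gamma α ≠ 0 := ne_of_gt hgpos
  have hGa1 : Real.Gamma (1 + α) = α * Real.Gamma α := by
    rw [add_comm]; exact Real.Gamma_add_one (ne_of_gt hα0)
  have hGa2 : Real.Gamma (2 + α) = (1 + α) * (α * Real.Gamma α) := by
    rw [show (2:ℝ) + α = (1 + α) + 1 by ring,
      Real.Gamma_add_one (by positivity), hGa1]
  rw [hGa1] at h1
  rw [hGa1, hGa2] at h2
  set A := f u - u with hA
  set B := f v - v with hB
  -- h0 : v = u + Γα/(Γα*1) * A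
  have e0 : v = u + A := by
    rw [div_self hg] at h0
    linarith [h0]
  have e1 : α * A + B = 0 := by
    field_simp at h1
    nlinarith [h1, hgpos]
  have e2 : (1 + α) * α / 2 * A + α * B + A = v - u := by
    field_simp at h2
    refine mul_right_cancel₀ (b := Real.Gamma α * 2) (mul_ne_zero hg two_ne_zero) ?_
    linear_combination -(Real.Gamma α) * h2
  have hB' : B = -(α * A) := by linarith
  have : α * (1 - α) * A = 0 := by
    rw [hB'] at e2
    linear_combination 2 * e2 + 2 * e0
  have hA0 : A = 0 := by
    rcases mul_eq_zero.mp this with h | h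
    · exfalso; rcases mul_eq_zero.mp h with h | h <;> nlinarith
    · exact h
  linarith [e0, hA0]
end

section
/- Let 0 < α < 1 and let z > 1 be a real number. Then Σ_{t=0}^{∞} [Γ(2t+α)/(Γ(α)·(2t)!)]·z^{−t} converges and equals z^{α/2}·[(√z − 1)^{−α} + (√z + 1)^{−α}]/2. -/
open Real

open MeasureTheory Set in
/-- Even part of the exponential series. -/
lemma hasSum_even_exp (y : ℝ) :
    HasSum (fun t : ℕ => y ^ (2 * t) / ((2 * t).factorial : ℝ))
      ((Real.exp y + Real.exp (-y)) / 2) := by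
  have h1 : HasSum (fun n : ℕ => y ^ n / (n.factorial : ℝ)) (Real.exp y) := by
    rw [Real.exp_eq_exp_ℝ]; exact NormedSpace.expSeries_div_hasSum_exp y
  have h2 : HasSum (fun n : ℕ => (-y) ^ n / (n.factorial : ℝ)) (Real.exp (-y)) := by
    rw [Real.exp_eq_exp_ℝ]; exact NormedSpace.expSeries_div_hasSum_exp (-y)
  have hg := (h1.add h2).div_const 2
  have hinj : Function.Injective (fun t : ℕ => 2 * t) := fun a b h => by simpa using h
  have h0 : ∀ n ∉ Set.range (fun t : ℕ => 2 * t),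
      (y ^ n / (n.factorial : ℝ) + (-y) ^ n / (n.factorial : ℝ)) / 2 = 0 := by
    intro n hn
    have hodd : Odd n := by
      rcases Nat.even_or_odd n with he | ho
      · obtain ⟨k, hk⟩ := he
        exact absurd ⟨k, by simp; omega⟩ hn
      · exact ho
    rw [hodd.neg_pow]; ring
  have := (hinj.hasSum_iff h0).mpr hg
  refine this.congr_fun fun t => ?_
  simp only [Function.comp_apply]
  rw [(even_two_mul t).neg_pow]
  ring

/-- Z-transform of the even-index part `φ₁(t) = φ̃_α(2t)` of the binomial family:
for real `z > 1`, `Σ Γ(2t+α)/(Γ(α)·(2t)!)·z^(-t) = z^(α/2)·[(√z-1)^(-α) + (√z+1)^(-α)]/2`. -/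
theorem Z_transform_phi1 (α z : ℝ) (h0 : 0 < α) (h1 : α < 1) (hz : 1 < z) :
    HasSum (fun t : ℕ =>
        Real.Gamma (2 * (t : ℝ) + α) / (Real.Gamma α * ((2 * t).factorial : ℝ)) *
          z ^ (-(t : ℤ)))
      (z ^ (α / 2) * ((Real.sqrt z - 1) ^ (-α) + (Real.sqrt z + 1) ^ (-α)) / 2) := by
  classical
  have hz0 : (0 : ℝ) < z := lt_trans one_pos hz
  have hGa : 0 < Real.Gamma α := Real.Gamma_pos_of_pos h0
  have hs1 : 1 < Real.sqrt z := by
    have := Real.sqrt_lt_sqrt zero_le_one hz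
    simpa using this
  have hsz0 : 0 < Real.sqrt z := lt_trans one_pos hs1
  set x : ℝ := (Real.sqrt z)⁻¹ with hxdef
  have hx0 : 0 < x := inv_pos.mpr hsz0
  have hx1 : x < 1 := inv_lt_one_of_one_lt₀ hs1
  have hsq : Real.sqrt z ^ 2 = z := Real.sq_sqrt hz0.le
  have hxz : ∀ t : ℕ, x ^ (2 * t) = z ^ (-(t : ℤ)) := by
    intro t
    rw [zpow_neg, zpow_natCast, hxdef, pow_mul, ← inv_pow, inv_pow, hsq]
  -- the integrand family
  set F : ℕ → ℝ → ℝ := fun t s =>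
    x ^ (2 * t) / (((2 * t).factorial : ℝ) * Real.Gamma α) *
      (Real.exp (-s) * s ^ (2 * (t : ℝ) + α - 1)) with hF
  have hpos : ∀ t : ℕ, (0 : ℝ) < 2 * (t : ℝ) + α := by
    intro t; positivity
  have hint : ∀ t : ℕ, MeasureTheory.IntegrableOn (F t) (Set.Ioi 0) := by
    intro t
    have := (Real.GammaIntegral_convergent (hpos t)).const_mul
      (x ^ (2 * t) / (((2 * t).factorial : ℝ) * Real.Gamma α))
    exact this
  have hval : ∀ t : ℕ, ∫ s in Set.Ioi 0, F t s =
      Real.Gamma (2 * (t : ℝ) + α) / (Real.Gamma α * ((2 * t).factorial : ℝ)) *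
        z ^ (-(t : ℤ)) := by
    intro t
    rw [hF]
    simp only []
    rw [MeasureTheory.integral_const_mul, ← Real.Gamma_eq_integral (hpos t), ← hxz t]
    field_simp
  have hnorm : ∀ t : ℕ, ∫ s in Set.Ioi 0, ‖F t s‖ = ∫ s in Set.Ioi 0, F t s := by
    intro t
    refine MeasureTheory.setIntegral_congr_fun measurableSet_Ioi fun s hs => ?_
    have hs0 : (0 : ℝ) < s := hs
    refine Real.norm_of_nonneg ?_
    have h1' : (0 : ℝ) ≤ x ^ (2 * t) / (((2 * t).factorial : ℝ) * Real.Gamma α) := by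
      positivity
    have h2' : (0 : ℝ) ≤ Real.exp (-s) * s ^ (2 * (t : ℝ) + α - 1) := by
      positivity
    exact mul_nonneg h1' h2'
  -- summability of the values
  have hterm_nonneg : ∀ t : ℕ,
      (0 : ℝ) ≤ Real.Gamma (2 * (t : ℝ) + α) / (Real.Gamma α * ((2 * t).factorial : ℝ)) *
        z ^ (-(t : ℤ)) := by
    intro t
    have := Real.Gamma_pos_of_pos (hpos t)
    positivity
  have hr0 : (0 : ℝ) ≤ z⁻¹ := by positivity
  have hr1 : z⁻¹ < 1 := inv_lt_one_of_one_lt₀ hz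
  have hsummable : Summable (fun t : ℕ =>
      Real.Gamma (2 * (t : ℝ) + α) / (Real.Gamma α * ((2 * t).factorial : ℝ)) *
        z ^ (-(t : ℤ))) := by
    refine Summable.of_nonneg_of_le hterm_nonneg (fun t => ?_)
      (((summable_geometric_of_lt_one hr0 hr1).mul_left (1 + (Real.Gamma α)⁻¹)))
    have hzpow : z ^ (-(t : ℤ)) = (z⁻¹) ^ t := by
      rw [zpow_neg, zpow_natCast, inv_pow]
    rcases Nat.eq_zero_or_pos t with rfl | ht
    · norm_num
      rw [div_self hGa.ne']
      have := inv_pos.mpr hGa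
      linarith
    · have hmem1 : (2 * (t : ℝ) + α) ∈ Set.Ici (2 : ℝ) := by
        have : (1 : ℝ) ≤ (t : ℝ) := by exact_mod_cast ht
        simp only [Set.mem_Ici]; linarith
      have hmem2 : (2 * (t : ℝ) + 1) ∈ Set.Ici (2 : ℝ) := by
        have : (1 : ℝ) ≤ (t : ℝ) := by exact_mod_cast ht
        simp only [Set.mem_Ici]; linarith
      have hlt : Real.Gamma (2 * (t : ℝ) + α) ≤ Real.Gamma (2 * (t : ℝ) + 1) :=
        (Real.Gamma_strictMonoOn_Ici hmem1 hmem2 (by linarith)).le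
      have hfac : Real.Gamma (2 * (t : ℝ) + 1) = ((2 * t).factorial : ℝ) := by
        have := Real.Gamma_nat_eq_factorial (2 * t)
        rw [← this]; norm_num
      have hfacpos : (0 : ℝ) < ((2 * t).factorial : ℝ) := by positivity
      rw [hzpow]
      have hle1 : Real.Gamma (2 * (t : ℝ) + α) / (Real.Gamma α * ((2 * t).factorial : ℝ)) ≤
          (Real.Gamma α)⁻¹ := by
        rw [div_le_iff₀ (by positivity)]
        calc Real.Gamma (2 * (t : ℝ) + α) ≤ ((2 * t).factorial : ℝ) := hlt.trans_eq hfac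
          _ = (Real.Gamma α)⁻¹ * (Real.Gamma α * ((2 * t).factorial : ℝ)) := by
              field_simp
      have hp : (0 : ℝ) ≤ (z⁻¹) ^ t := by positivity
      calc Real.Gamma (2 * (t : ℝ) + α) / (Real.Gamma α * ((2 * t).factorial : ℝ)) * (z⁻¹) ^ t
          ≤ (Real.Gamma α)⁻¹ * (z⁻¹) ^ t := mul_le_mul_of_nonneg_right hle1 hp
        _ ≤ (1 + (Real.Gamma α)⁻¹) * (z⁻¹) ^ t := by nlinarith
  -- swap sum and integral
  have hF_sum : Summable fun t : ℕ => ∫ s in Set.Ioi 0, ‖F t s‖ :=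
    hsummable.congr fun t => ((hnorm t).trans (hval t)).symm
  have hkey := MeasureTheory.hasSum_integral_of_summable_integral_norm
    (F := F) (μ := MeasureTheory.volume.restrict (Set.Ioi 0)) hint hF_sum
  -- identify the two sides
  have hfun : (fun t : ℕ => ∫ s in Set.Ioi 0, F t s) = fun t : ℕ =>
      Real.Gamma (2 * (t : ℝ) + α) / (Real.Gamma α * ((2 * t).factorial : ℝ)) *
        z ^ (-(t : ℤ)) := funext hval
  rw [hfun] at hkey
  convert hkey using 1
  · rfl
  -- now compute the integral of the pointwise sum
  have h1x : (0 : ℝ) < 1 - x := by linarith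
  have h1x' : (0 : ℝ) < 1 + x := by linarith
  have htsum : ∀ s ∈ Set.Ioi (0 : ℝ), (∑' t : ℕ, F t s) =
      1 / (2 * Real.Gamma α) * (s ^ (α - 1) * Real.exp (-((1 - x) * s))) +
      1 / (2 * Real.Gamma α) * (s ^ (α - 1) * Real.exp (-((1 + x) * s))) := by
    intro s hs
    have hs0 : (0 : ℝ) < s := hs
    have hcosh := (hasSum_even_exp (x * s)).mul_left
      (Real.exp (-s) * s ^ (α - 1) / Real.Gamma α)
    have hFeq : ∀ t : ℕ, Real.exp (-s) * s ^ (α - 1) / Real.Gamma α *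
        ((x * s) ^ (2 * t) / ((2 * t).factorial : ℝ)) = F t s := by
      intro t
      rw [hF]
      simp only [mul_pow]
      have : s ^ (2 * (t : ℝ) + α - 1) = s ^ (2 * t) * s ^ (α - 1) := by
        rw [← Real.rpow_natCast s (2 * t), ← Real.rpow_add hs0]
        congr 1
        push_cast
        ring
      rw [this]
      ring
    have hcosh' : HasSum (fun t : ℕ => F t s)
        (Real.exp (-s) * s ^ (α - 1) / Real.Gamma α *
          ((Real.exp (x * s) + Real.exp (-(x * s))) / 2)) := by
      exact hcosh.congr_fun fun t => (hFeq t).symm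
    have g1 : Real.exp (-s) * Real.exp (x * s) = Real.exp (-((1 - x) * s)) := by
      rw [← Real.exp_add]; congr 1; ring
    have g2 : Real.exp (-s) * Real.exp (-(x * s)) = Real.exp (-((1 + x) * s)) := by
      rw [← Real.exp_add]; congr 1; ring
    rw [hcosh'.tsum_eq, ← g1, ← g2]
    field_simp
  rw [MeasureTheory.setIntegral_congr_fun measurableSet_Ioi htsum]
  have hint1 : MeasureTheory.IntegrableOn (fun s : ℝ => s ^ (α - 1) * Real.exp (-((1 - x) * s)))
      (Set.Ioi 0) := by
    have := integrableOn_rpow_mul_exp_neg_mul_rpow (p := 1) (s := α - 1) (b := 1 - x)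
      (by linarith) zero_lt_one h1x
    refine this.congr_fun (fun s hs => ?_) measurableSet_Ioi
    simp only [Real.rpow_one, neg_mul]
  have hint2 : MeasureTheory.IntegrableOn (fun s : ℝ => s ^ (α - 1) * Real.exp (-((1 + x) * s)))
      (Set.Ioi 0) := by
    have := integrableOn_rpow_mul_exp_neg_mul_rpow (p := 1) (s := α - 1) (b := 1 + x)
      (by linarith) zero_lt_one h1x'
    refine this.congr_fun (fun s hs => ?_) measurableSet_Ioi
    simp only [Real.rpow_one, neg_mul]
  rw [MeasureTheory.integral_add (hint1.const_mul _) (hint2.const_mul _),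
    MeasureTheory.integral_const_mul, MeasureTheory.integral_const_mul,
    Real.integral_rpow_mul_exp_neg_mul_Ioi h0 h1x,
    Real.integral_rpow_mul_exp_neg_mul_Ioi h0 h1x']
  -- final algebraic identity
  have hone_sub : 1 / (1 - x) = Real.sqrt z / (Real.sqrt z - 1) := by
    rw [hxdef]
    field_simp
  have hone_add : 1 / (1 + x) = Real.sqrt z / (Real.sqrt z + 1) := by
    rw [hxdef]
    field_simp
  have hsm1 : (0 : ℝ) < Real.sqrt z - 1 := by linarith
  have hsp1 : (0 : ℝ) < Real.sqrt z + 1 := by linarith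
  have hzha : z ^ (α / 2) = Real.sqrt z ^ α := by
    rw [Real.sqrt_eq_rpow, ← Real.rpow_mul hz0.le]
    congr 1
    ring
  have hdiv1 : (1 / (1 - x)) ^ α = z ^ (α / 2) * (Real.sqrt z - 1) ^ (-α) := by
    rw [hone_sub, Real.div_rpow hsz0.le hsm1.le, Real.rpow_neg hsm1.le, hzha]
    rw [div_eq_mul_inv]
  have hdiv2 : (1 / (1 + x)) ^ α = z ^ (α / 2) * (Real.sqrt z + 1) ^ (-α) := by
    rw [hone_add, Real.div_rpow hsz0.le hsp1.le, Real.rpow_neg hsp1.le, hzha]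
    rw [div_eq_mul_inv]
  rw [hdiv1, hdiv2]
  field_simp
end

section
/- Let 0 < α < 1 and let z > 1 be a real number. Then Σ_{t=0}^{∞} [Γ(2t+1+α)/(Γ(α)·(2t+1)!)]·z^{−t} converges and equals z^{(α+1)/2}·[(√z − 1)^{−α} − (√z + 1)^{−α}]/2. -/
open Real

private lemma hasDerivAt_one_sub_cpow (t : ℂ) {w : ℂ} (hw : ‖w‖ < 1) :
    HasDerivAt (fun u : ℂ => (1 - u) ^ t) (t * (1 - w) ^ (t - 1) * (-1)) w := by
  have hslit : (1 - w) ∈ Complex.slitPlane := by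
    left
    simp only [Complex.sub_re, Complex.one_re]
    have : w.re < 1 := lt_of_le_of_lt (Complex.re_le_norm w) hw
    linarith
  have h1 : HasDerivAt (fun u : ℂ => 1 - u) (-1) w := (hasDerivAt_id w).const_sub 1
  exact h1.cpow_const hslit

private lemma iterDeriv_one_sub_cpow (s : ℂ) (n : ℕ) :
    ∀ w : ℂ, ‖w‖ < 1 →
      iteratedDeriv n (fun w : ℂ => (1 - w) ^ (-s)) w
        = (∏ i ∈ Finset.range n, (s + i)) * (1 - w) ^ (-s - n) := by
  induction n with
  | zero => intro w hw; simp
  | succ n ih =>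
    intro w hw
    have hball : ∀ᶠ u in nhds w, ‖u‖ < 1 := by
      have hmem : Metric.ball (0 : ℂ) 1 ∈ nhds w :=
        Metric.isOpen_ball.mem_nhds (by simpa using hw)
      filter_upwards [hmem] with u hu
      simpa using hu
    rw [iteratedDeriv_succ]
    have heq : iteratedDeriv n (fun w : ℂ => (1 - w) ^ (-s))
        =ᶠ[nhds w] fun u => (∏ i ∈ Finset.range n, (s + i)) * (1 - u) ^ (-s - n) := by
      filter_upwards [hball] with u hu using ih u hu
    rw [heq.deriv_eq]
    have hd : HasDerivAt (fun u : ℂ => (1 - u) ^ (-s - n))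
        ((-s - n) * (1 - w) ^ (-s - n - 1) * (-1)) w := hasDerivAt_one_sub_cpow _ hw
    rw [(hd.const_mul (∏ i ∈ Finset.range n, (s + i))).deriv]
    rw [Finset.prod_range_succ]
    push_cast
    rw [show -s - ((n : ℂ) + 1) = -s - n - 1 by ring]
    ring

private lemma hasSum_binomial_complex (s : ℂ) {x : ℝ} (hx : |x| < 1) :
    HasSum (fun n : ℕ => ((n.factorial : ℂ))⁻¹ * ((∏ i ∈ Finset.range n, (s + i)) * (x : ℂ) ^ n))
      ((1 - (x : ℂ)) ^ (-s)) := by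
  have hdiff : DifferentiableOn ℂ (fun w : ℂ => (1 - w) ^ (-s)) (Metric.ball 0 1) := by
    intro w hw
    have hw' : ‖w‖ < 1 := by simpa using hw
    exact (hasDerivAt_one_sub_cpow (-s) hw').differentiableAt.differentiableWithinAt
  have hxball : (x : ℂ) ∈ Metric.ball (0 : ℂ) 1 := by
    simp only [Metric.mem_ball, dist_zero_right, Complex.norm_real, Real.norm_eq_abs]
    exact hx
  have H := Complex.hasSum_taylorSeries_on_ball hdiff hxball
  have h0 : ‖(0 : ℂ)‖ < 1 := by simp
  refine H.congr_fun fun n => ?_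
  rw [iterDeriv_one_sub_cpow s n 0 h0]
  simp only [sub_zero, smul_eq_mul]
  rw [Complex.one_cpow]
  ring

private lemma prod_eq_gamma (α : ℝ) (h0 : 0 < α) (n : ℕ) :
    (∏ i ∈ Finset.range n, (α + i)) = Real.Gamma (α + n) / Real.Gamma α := by
  have hΓ : Real.Gamma α ≠ 0 := (Real.Gamma_pos_of_pos h0).ne'
  induction n with
  | zero => simp [hΓ]
  | succ n ih =>
    have hne : α + (n : ℝ) ≠ 0 := by positivity
    rw [Finset.prod_range_succ, ih]
    have hG : Real.Gamma (α + ((n : ℕ) + 1 : ℕ)) = (α + n) * Real.Gamma (α + n) := by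
      push_cast
      rw [show α + ((n : ℝ) + 1) = (α + n) + 1 by ring, Real.Gamma_add_one hne]
    rw [hG]
    field_simp

private lemma hasSum_binomial_real (α : ℝ) (h0 : 0 < α) {x : ℝ} (hx : |x| < 1) :
    HasSum (fun n : ℕ => Real.Gamma (α + n) / (Real.Gamma α * n.factorial) * x ^ n)
      ((1 - x) ^ (-α)) := by
  have hΓ : Real.Gamma α ≠ 0 := (Real.Gamma_pos_of_pos h0).ne'
  have hx1 : x < 1 := lt_of_le_of_lt (le_abs_self x) hx
  have h := hasSum_binomial_complex (α : ℂ) hx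
  have hterm : ∀ n : ℕ,
      (((Real.Gamma (α + n) / (Real.Gamma α * n.factorial) * x ^ n : ℝ)) : ℂ)
        = ((n.factorial : ℂ))⁻¹ * ((∏ i ∈ Finset.range n, ((α : ℂ) + i)) * (x : ℂ) ^ n) := by
    intro n
    have hprod : (∏ i ∈ Finset.range n, ((α : ℂ) + i))
        = (((∏ i ∈ Finset.range n, (α + i)) : ℝ) : ℂ) := by
      push_cast
      rfl
    rw [hprod, prod_eq_gamma α h0 n]
    have hfac : (n.factorial : ℝ) ≠ 0 := Nat.cast_ne_zero.mpr n.factorial_ne_zero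
    push_cast
    field_simp
  have hval : ((1 - (x : ℂ)) ^ (-(α : ℂ))) = (((1 - x) ^ (-α) : ℝ) : ℂ) := by
    rw [Complex.ofReal_cpow (by linarith) (-α)]
    push_cast
    rfl
  have h' : HasSum (fun n : ℕ =>
      (((Real.Gamma (α + n) / (Real.Gamma α * n.factorial) * x ^ n : ℝ)) : ℂ))
      (((1 - x) ^ (-α) : ℝ) : ℂ) := by
    rw [← hval]
    exact h.congr_fun hterm
  exact Complex.hasSum_ofReal.mp h'

/-- Z-transform of the odd-index part `φ₂(t) = φ̃_α(2t+1)` of the binomial family: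
for real `z > 1`, `Σ Γ(2t+1+α)/(Γ(α)·(2t+1)!)·z^(-t) = z^((α+1)/2)·[(√z-1)^(-α) - (√z+1)^(-α)]/2`. -/
theorem Z_transform_phi2 (α z : ℝ) (h0 : 0 < α) (h1 : α < 1) (hz : 1 < z) :
    HasSum (fun t : ℕ =>
        Real.Gamma (2 * (t : ℝ) + 1 + α) / (Real.Gamma α * ((2 * t + 1).factorial : ℝ)) *
          z ^ (-(t : ℤ)))
      (z ^ ((α + 1) / 2) * ((Real.sqrt z - 1) ^ (-α) - (Real.sqrt z + 1) ^ (-α)) / 2) := by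
  have hz0 : (0 : ℝ) < z := by linarith
  have hs1 : 1 < Real.sqrt z := by
    rw [show (1 : ℝ) = Real.sqrt 1 by simp]
    exact Real.sqrt_lt_sqrt (by norm_num) hz
  have hs0 : 0 < Real.sqrt z := by linarith
  set x : ℝ := (Real.sqrt z)⁻¹ with hxdef
  have hx0 : 0 < x := inv_pos.mpr hs0
  have hxlt : x < 1 := inv_lt_one_of_one_lt₀ hs1
  have hx : |x| < 1 := by rw [abs_of_pos hx0]; exact hxlt
  have hx' : |(-x)| < 1 := by rwa [abs_neg]
  have hA := hasSum_binomial_real α h0 hx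
  have hB' := hasSum_binomial_real α h0 hx'
  have hB : HasSum (fun n : ℕ => Real.Gamma (α + n) / (Real.Gamma α * n.factorial) * (-x) ^ n)
      ((1 + x) ^ (-α)) := by
    rwa [show (1 : ℝ) - -x = 1 + x by ring] at hB'
  have hS := hA.sub hB
  have hinj : Function.Injective (fun t : ℕ => 2 * t + 1) := by
    intro a b h
    simpa using h
  have hsupp : ∀ n ∉ Set.range (fun t : ℕ => 2 * t + 1),
      Real.Gamma (α + n) / (Real.Gamma α * n.factorial) * x ^ n
        - Real.Gamma (α + n) / (Real.Gamma α * n.factorial) * (-x) ^ n = 0 := by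
    intro n hn
    have hev : Even n := by
      rcases Nat.even_or_odd n with h | h
      · exact h
      · obtain ⟨k, hk⟩ := h
        exact absurd ⟨k, by simp; omega⟩ hn
    rw [hev.neg_pow]
    ring
  have hOdd := (hinj.hasSum_iff hsupp).mpr hS
  have hfin := hOdd.mul_left (Real.sqrt z / 2)
  simp only [Function.comp_def] at hfin
  -- algebraic identity for the value
  have hfacmul : ∀ u : ℝ, 0 < u →
      Real.sqrt z * (u / Real.sqrt z) ^ (-α) = z ^ ((α + 1) / 2) * u ^ (-α) := by
    intro u hu
    rw [Real.div_rpow hu.le hs0.le, Real.sqrt_eq_rpow, ← Real.rpow_mul hz0.le]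
    rw [show z ^ ((1 : ℝ) / 2) * (u ^ (-α) / z ^ ((1 : ℝ) / 2 * -α))
        = u ^ (-α) * (z ^ ((1 : ℝ) / 2) / z ^ ((1 : ℝ) / 2 * -α)) by ring]
    rw [← Real.rpow_sub hz0, show (1 : ℝ) / 2 - 1 / 2 * -α = (α + 1) / 2 by ring]
    ring
  have hsne : Real.sqrt z ≠ 0 := hs0.ne'
  have e1 : 1 - x = (Real.sqrt z - 1) / Real.sqrt z := by
    rw [hxdef]; field_simp
  have e2 : 1 + x = (Real.sqrt z + 1) / Real.sqrt z := by
    rw [hxdef]; field_simp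
  have hval2 : Real.sqrt z / 2 * ((1 - x) ^ (-α) - (1 + x) ^ (-α))
      = z ^ ((α + 1) / 2) * ((Real.sqrt z - 1) ^ (-α) - (Real.sqrt z + 1) ^ (-α)) / 2 := by
    rw [e1, e2]
    have hm := hfacmul (Real.sqrt z - 1) (by linarith)
    have hp := hfacmul (Real.sqrt z + 1) (by linarith)
    rw [show Real.sqrt z / 2 * (((Real.sqrt z - 1) / Real.sqrt z) ^ (-α)
          - ((Real.sqrt z + 1) / Real.sqrt z) ^ (-α))
        = (Real.sqrt z * (((Real.sqrt z - 1) / Real.sqrt z) ^ (-α))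
          - Real.sqrt z * (((Real.sqrt z + 1) / Real.sqrt z) ^ (-α))) / 2 by ring, hm, hp]
    ring
  rw [hval2] at hfin
  refine hfin.congr_fun fun t => ?_
  have hodd : Odd (2 * t + 1) := ⟨t, rfl⟩
  rw [hodd.neg_pow]
  have hpow : x ^ (2 * t + 1) = (z ^ t * Real.sqrt z)⁻¹ := by
    rw [hxdef, inv_pow]
    congr 1
    rw [pow_succ, pow_mul, Real.sq_sqrt hz0.le]
  have hzpow : z ^ (-(t : ℤ)) = (z ^ t)⁻¹ := by
    simp
  have hGam : Real.Gamma (2 * (t : ℝ) + 1 + α) = Real.Gamma (α + ((2 * t + 1 : ℕ) : ℝ)) := by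
    congr 1
    push_cast
    ring
  rw [hzpow, hGam, hpow]
  have hzt : (z : ℝ) ^ t ≠ 0 := pow_ne_zero t hz0.ne'
  have hΓ : Real.Gamma α ≠ 0 := (Real.Gamma_pos_of_pos h0).ne'
  have hfac : ((2 * t + 1).factorial : ℝ) ≠ 0 := Nat.cast_ne_zero.mpr (2 * t + 1).factorial_ne_zero
  field_simp
  ring
end

section
/- Let 0 < α < 1 and λ ≥ 1 + 2^{α} be real, set D = (λ − (1 − 2^{α}))·(λ − (1 + 2^{α})), a = 1 − 2^{α} + √D and b = 1 − 2^{α} − √D. Then (a − (1 − 2^{α/2}·sin(απ/4)))·(b − (1 − 2^{α/2}·sin(απ/4))) = −2^{α}·(cos(απ/4))² if and only if λ = 1 + √(2^{α} + 2^{1+2α} − 2^{1+3α/2}·sin(απ/4)). -/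
set_option maxHeartbeats 1000000


open Real

/-- For the fractional logistic map, the point `(a, b) = (f'(u), f'(v))` lies on the
boundary curve Γ₂ exactly at `λ = 1 + √(2^α + 2^(1+2α) - 2^(1+3α/2) sin(απ/4))`. -/
theorem logistic_crosses_Gamma2 (α lam : ℝ) (h0 : 0 < α) (h1 : α < 1)
    (hlam : 1 + (2 : ℝ) ^ α ≤ lam)
    (D a b : ℝ)
    (hD : D = (lam - (1 - (2 : ℝ) ^ α)) * (lam - (1 + (2 : ℝ) ^ α)))
    (ha : a = 1 - (2 : ℝ) ^ α + Real.sqrt D)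
    (hb : b = 1 - (2 : ℝ) ^ α - Real.sqrt D) :
    (a - (1 - (2 : ℝ) ^ (α / 2) * Real.sin (α * π / 4))) *
        (b - (1 - (2 : ℝ) ^ (α / 2) * Real.sin (α * π / 4))) =
        -((2 : ℝ) ^ α * (Real.cos (α * π / 4)) ^ 2) ↔
      lam = 1 + Real.sqrt ((2 : ℝ) ^ α + (2 : ℝ) ^ (1 + 2 * α) -
        (2 : ℝ) ^ (1 + 3 * α / 2) * Real.sin (α * π / 4)) := by
  have two_pos : (0 : ℝ) < 2 := by norm_num
  set t : ℝ := (2 : ℝ) ^ α with htdef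
  set u : ℝ := (2 : ℝ) ^ (α / 2) with hudef
  set S : ℝ := Real.sin (α * π / 4) with hSdef
  set C : ℝ := Real.cos (α * π / 4) with hCdef
  have hut : u * u = t := by
    rw [hudef, htdef, ← Real.rpow_add two_pos]
    norm_num
  have he1 : (2 : ℝ) ^ (1 + 2 * α) = 2 * (t * t) := by
    rw [htdef, show (1 : ℝ) + 2 * α = α + α + 1 by ring,
      Real.rpow_add two_pos, Real.rpow_add two_pos, Real.rpow_one]
    ring
  have he2 : (2 : ℝ) ^ (1 + 3 * α / 2) = 2 * t * u := by
    rw [htdef, hudef, show (1 : ℝ) + 3 * α / 2 = α + α / 2 + 1 by ring,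
      Real.rpow_add two_pos, Real.rpow_add two_pos, Real.rpow_one]
    ring
  have ht0 : (0 : ℝ) < t := Real.rpow_pos_of_pos two_pos α
  have hu0 : (0 : ℝ) < u := Real.rpow_pos_of_pos two_pos (α / 2)
  have ht1 : (1 : ℝ) < t := by
    rw [htdef]
    have := (Real.rpow_lt_rpow_left_iff (x := (2:ℝ)) (y := 0) (z := α) one_lt_two).mpr h0
    simpa [Real.rpow_zero] using this
  have hu2 : u < 1.5 := by
    have hle : u ≤ (2 : ℝ) ^ ((1:ℝ)/2) :=
      (Real.rpow_le_rpow_left_iff one_lt_two).mpr (by linarith)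
    have hsq2 : (2 : ℝ) ^ ((1:ℝ)/2) * (2 : ℝ) ^ ((1:ℝ)/2) = 2 := by
      rw [← Real.rpow_add two_pos]; norm_num
    nlinarith [Real.rpow_pos_of_pos two_pos ((1:ℝ)/2)]
  have hS1 : S ≤ 1 := Real.sin_le_one _
  have hs : S ^ 2 + C ^ 2 = 1 := Real.sin_sq_add_cos_sq _
  have hD0 : (0 : ℝ) ≤ D := by rw [hD]; nlinarith
  have hsq : Real.sqrt D * Real.sqrt D = D := Real.mul_self_sqrt hD0
  have hh1 : 2 * t * u * S ≤ 2 * t * u := by nlinarith [mul_pos ht0 hu0]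
  have hh2 : 2 * t * u ≤ 3 * t := by nlinarith
  have hE0 : (0 : ℝ) ≤ t + 2 * (t * t) - 2 * t * u * S := by nlinarith
  have h5 : u * u * S ^ 2 = t * S ^ 2 := by rw [hut]
  rw [he1, he2]
  constructor
  · intro h
    rw [ha, hb] at h
    have key : (lam - 1) ^ 2 = t + 2 * (t * t) - 2 * t * u * S := by
      linear_combination -h - hsq + h5 + t * hs - hD
    have hsr : Real.sqrt (t + 2 * (t * t) - 2 * t * u * S) = lam - 1 := by
      rw [← key, Real.sqrt_sq (by nlinarith)]
    linarith
  · intro h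
    have hl : lam - 1 = Real.sqrt (t + 2 * (t * t) - 2 * t * u * S) := by linarith
    have key : (lam - 1) ^ 2 = t + 2 * (t * t) - 2 * t * u * S := by
      rw [hl, Real.sq_sqrt hE0]
    rw [ha, hb]
    linear_combination -key - hsq + h5 + t * hs - hD
end

section
/- Let 0 < α < 1 and let β < 0 be a real number with β ≤ (1 − 2^{α})/6, and set f(x) = βx(6 − x²), u₀ = √((6β + 2^{α} − 1)/β) and v₀ = −u₀. Then u₀ is real, f(u₀) = u₀ + 2^{α−1}(v₀ − u₀) and f(v₀) = v₀ + 2^{α−1}(u₀ − v₀), and f'(u₀) = f'(v₀) = −12β − 3(2^{α} − 1). -/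
open Real

/-- For the fractional cubic map `f(x) = βx(6 - x²)` with `β < 0` and
`β ≤ (1 - 2^α)/6`, the symmetric points `u₀, v₀ = -u₀` satisfy the asymptotic
period-2 conditions, and the derivatives there both equal `-12β - 3(2^α - 1)`. -/
theorem cubic_symmetric_period_two_points (α β : ℝ) (h0 : 0 < α) (h1 : α < 1)
    (hβ : β < 0) (hβ2 : β ≤ (1 - (2 : ℝ) ^ α) / 6)
    (f : ℝ → ℝ) (hf : ∀ x : ℝ, f x = β * x * (6 - x ^ 2))
    (u₀ v₀ : ℝ)
    (hu : u₀ = Real.sqrt ((6 * β + (2 : ℝ) ^ α - 1) / β))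
    (hv : v₀ = -u₀) :
    f u₀ = u₀ + (2 : ℝ) ^ (α - 1) * (v₀ - u₀) ∧
    f v₀ = v₀ + (2 : ℝ) ^ (α - 1) * (u₀ - v₀) ∧
    deriv f u₀ = -12 * β - 3 * ((2 : ℝ) ^ α - 1) ∧
    deriv f v₀ = -12 * β - 3 * ((2 : ℝ) ^ α - 1) := by
  have hnum : 6 * β + (2 : ℝ) ^ α - 1 ≤ 0 := by nlinarith
  have hratio : 0 ≤ (6 * β + (2 : ℝ) ^ α - 1) / β :=
    div_nonneg_iff.mpr (Or.inr ⟨hnum, hβ.le⟩)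
  have hsq : u₀ ^ 2 = (6 * β + (2 : ℝ) ^ α - 1) / β := by
    rw [hu, sq, Real.mul_self_sqrt hratio]
  have hβu : β * u₀ ^ 2 = 6 * β + (2 : ℝ) ^ α - 1 := by
    rw [hsq, mul_div_cancel₀ _ hβ.ne]
  have hpow : (2 : ℝ) ^ (α - 1) * 2 = (2 : ℝ) ^ α := by
    rw [Real.rpow_sub (by norm_num : (0:ℝ) < 2), Real.rpow_one]
    field_simp
  have hfun : deriv f = fun x => β * (6 - x ^ 2) + β * x * (-(2 * x)) := by
    funext x
    have : f = fun x => β * x * (6 - x ^ 2) := funext hf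
    rw [this]
    have h1 : HasDerivAt (fun x : ℝ => β * x * (6 - x ^ 2))
        (β * (6 - x ^ 2) + β * x * (-(2 * x))) x := by
      have := (((hasDerivAt_id x).const_mul β).mul
        ((hasDerivAt_pow 2 x).const_sub 6))
      simp only [id_eq] at this
      exact this.congr_deriv (by push_cast; ring)
    rw [h1.deriv]
  refine ⟨?_, ?_, ?_, ?_⟩
  · rw [hf, hv]; linear_combination (-u₀) * hβu + u₀ * hpow
  · rw [hf, hv]; linear_combination u₀ * hβu - u₀ * hpow
  · rw [hfun]; show β * (6 - u₀ ^ 2) + β * u₀ * (-(2 * u₀)) = _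
    linear_combination (-3) * hβu
  · rw [hfun, hv]; show β * (6 - (-u₀) ^ 2) + β * (-u₀) * (-(2 * -u₀)) = _
    linear_combination (-3) * hβu
end

section
/- Let 0 < α < 1 and set R = 2^{α} + 4^{α} − 2^{1+3α/2}·sin(απ/4). Then R > 0, the denominator 2^{α/2} − 2·sin(απ/4) is nonzero, and the point (a₁, b₁) with a₁ = [2^{1+α/2} − 2·sin(απ/4) − √R]/[2^{α/2} − 2·sin(απ/4)] and b₁ = [2^{1+α/2} − 2^{1+α}·sin(απ/4) − (2 − 2^{α})·√R]/[2^{1+α/2} + 2^{3α/2} − 2^{1+α}·sin(απ/4) − 2√R] satisfies both (a₁ − (1 − 2^{α−1}))·(b₁ − (1 − 2^{α−1})) = 4^{α−1} and (a₁ − (1 − 2^{α/2}·sin(απ/4)))·(b₁ − (1 − 2^{α/2}·sin(απ/4))) = −2^{α}·(cos(απ/4))²; i.e., (a₁, b₁) is an intersection point of the boundary curves Γ₁ and Γ₂. -/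
open Real

set_option maxHeartbeats 1000000 in
/-- The point `(a₁, b₁)` is an intersection point of the boundary curves Γ₁ and Γ₂
of the stability region of the fractional-order alternating linear map. -/
theorem Gamma1_Gamma2_intersection (α : ℝ) (h0 : 0 < α) (h1 : α < 1)
    (R : ℝ)
    (hR : R = (2 : ℝ) ^ α + (4 : ℝ) ^ α - (2 : ℝ) ^ (1 + 3 * α / 2) * Real.sin (α * π / 4))
    (a₁ b₁ : ℝ)
    (ha : a₁ = ((2 : ℝ) ^ (1 + α / 2) - 2 * Real.sin (α * π / 4) - Real.sqrt R) /
        ((2 : ℝ) ^ (α / 2) - 2 * Real.sin (α * π / 4)))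
    (hb : b₁ = ((2 : ℝ) ^ (1 + α / 2) - (2 : ℝ) ^ (1 + α) * Real.sin (α * π / 4) -
          (2 - (2 : ℝ) ^ α) * Real.sqrt R) /
        ((2 : ℝ) ^ (1 + α / 2) + (2 : ℝ) ^ (3 * α / 2) -
          (2 : ℝ) ^ (1 + α) * Real.sin (α * π / 4) - 2 * Real.sqrt R)) :
    0 < R ∧
    (2 : ℝ) ^ (α / 2) - 2 * Real.sin (α * π / 4) ≠ 0 ∧
    (a₁ - (1 - (2 : ℝ) ^ (α - 1))) * (b₁ - (1 - (2 : ℝ) ^ (α - 1))) = (4 : ℝ) ^ (α - 1) ∧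
    (a₁ - (1 - (2 : ℝ) ^ (α / 2) * Real.sin (α * π / 4))) *
        (b₁ - (1 - (2 : ℝ) ^ (α / 2) * Real.sin (α * π / 4))) =
      -((2 : ℝ) ^ α * (Real.cos (α * π / 4)) ^ 2) := by
  have hπ := Real.pi_pos
  set s := Real.sin (α * π / 4) with hs_def
  set T := (2 : ℝ) ^ (α / 2) with hT_def
  have two_pos' : (0:ℝ) < 2 := by norm_num
  have h2 : (2 : ℝ) ^ α = T ^ 2 := by
    rw [show α = α / 2 + α / 2 by ring, Real.rpow_add two_pos']; ring
  have h4 : (4 : ℝ) ^ α = T ^ 4 := by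
    rw [show (4:ℝ) = 2 * 2 by norm_num, Real.mul_rpow (by norm_num) (by norm_num), h2]; ring
  have hT3 : (2 : ℝ) ^ (3 * α / 2) = T ^ 3 := by
    rw [show 3 * α / 2 = α / 2 + (α / 2 + α / 2) by ring, Real.rpow_add two_pos',
      Real.rpow_add two_pos']; ring
  have h3 : (2 : ℝ) ^ (1 + 3 * α / 2) = 2 * T ^ 3 := by
    rw [Real.rpow_add two_pos', Real.rpow_one, hT3]
  have e2T : (2 : ℝ) ^ (1 + α / 2) = 2 * T := by
    rw [Real.rpow_add two_pos', Real.rpow_one]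
  have h1α : (2 : ℝ) ^ (1 + α) = 2 * T ^ 2 := by
    rw [Real.rpow_add two_pos', Real.rpow_one, h2]
  have hαm1 : (2 : ℝ) ^ (α - 1) = T ^ 2 / 2 := by
    rw [Real.rpow_sub two_pos', Real.rpow_one, h2]
  have h4m1 : (4 : ℝ) ^ (α - 1) = T ^ 4 / 4 := by
    rw [Real.rpow_sub (by norm_num : (0:ℝ) < 4), Real.rpow_one, h4]
  have hT1 : 1 < T :=
    (Real.one_lt_rpow_iff_of_pos two_pos').mpr (Or.inl ⟨one_lt_two, by linarith⟩)
  have hT0 : 0 < T := by linarith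
  have hexpT : Real.exp (α / 2 * Real.log 2) = T := by
    rw [hT_def, Real.rpow_def_of_pos (by norm_num : (0:ℝ) < 2), mul_comm]
  clear_value T
  have hc0 : 0 < Real.cos (α * π / 4) := by
    apply Real.cos_pos_of_mem_Ioo
    constructor <;> nlinarith
  have hsc : s ^ 2 + Real.cos (α * π / 4) ^ 2 = 1 := Real.sin_sq_add_cos_sq _
  have hs0 : 0 < s := by
    apply Real.sin_pos_of_pos_of_lt_pi <;> nlinarith
  clear_value s
  have h2α : (0:ℝ) < 2 - α := by linarith
  have hlog2 : 0 < Real.log 2 := Real.log_pos one_lt_two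
  have hlam0 : (0:ℝ) < 1 / (2 - α) := by positivity
  have hmu0 : (0:ℝ) < (1 - α) / (2 - α) := div_pos (by linarith) h2α
  have h2αne : (2:ℝ) - α ≠ 0 := by intro h; linarith
  have hsum : 1 / (2 - α) + (1 - α) / (2 - α) = 1 := by
    field_simp
    linarith
  -- key inequality : 2 * s < T
  have hkey : 2 * s < T := by
    have hne : α / 2 * Real.log 2 ≠ Real.log 2 := by
      intro h
      have h' : α / 2 * Real.log 2 < 1 * Real.log 2 :=
        mul_lt_mul_of_pos_right (by linarith) hlog2
      rw [one_mul] at h'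
      exact absurd h (ne_of_lt h')
    have hA := strictConvexOn_exp.2 (Set.mem_univ (α / 2 * Real.log 2))
      (Set.mem_univ (Real.log 2)) hne hlam0 hmu0 hsum
    simp only [smul_eq_mul] at hA
    have harg : 1 / (2 - α) * (α / 2 * Real.log 2) + (1 - α) / (2 - α) * Real.log 2
        = 1 / 2 * Real.log 2 := by
      field_simp
      ring
    rw [harg] at hA
    have hexp2 : Real.exp (Real.log 2) = 2 := Real.exp_log two_pos'
    rw [hexpT, hexp2] at hA
    set E : ℝ := Real.exp (1 / 2 * Real.log 2) with hE_def
    have hE0 : 0 < E := Real.exp_pos _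
    have hE2 : E ^ 2 = 2 := by
      rw [hE_def, sq, ← Real.exp_add,
        show 1 / 2 * Real.log 2 + 1 / 2 * Real.log 2 = Real.log 2 by ring, hexp2]
    clear_value E
    have hEsqrt : E = Real.sqrt 2 := by
      rw [show (2:ℝ) = E ^ 2 from hE2.symm, Real.sqrt_sq (le_of_lt hE0)]
    have hαπ : α * π < 1 * π := mul_lt_mul_of_pos_right h1 hπ
    have hmem1 : α * π / 4 ∈ Set.Icc 0 π := ⟨by positivity, by linarith⟩
    have hmem2 : π / 2 ∈ Set.Icc 0 π := ⟨by positivity, by linarith⟩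
    have hB := strictConcaveOn_sin_Icc.concaveOn.2 hmem1 hmem2 (le_of_lt hlam0)
      (le_of_lt hmu0) hsum
    simp only [smul_eq_mul] at hB
    have harg2 : 1 / (2 - α) * (α * π / 4) + (1 - α) / (2 - α) * (π / 2) = π / 4 := by
      field_simp
      ring
    rw [harg2, Real.sin_pi_div_two, Real.sin_pi_div_four, ← hEsqrt, ← hs_def] at hB
    -- clear denominators
    have hA' : (2 - α) * E < T + (1 - α) * 2 := by
      have h := mul_lt_mul_of_pos_left hA h2α
      have e : (2 - α) * (1 / (2 - α) * T + (1 - α) / (2 - α) * 2) = T + (1 - α) * 2 := by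
        field_simp [h2αne]
      rw [e] at h
      exact h
    have hB' : s + (1 - α) * 1 ≤ (2 - α) * (E / 2) := by
      have h := mul_le_mul_of_nonneg_left hB (le_of_lt h2α)
      have e : (2 - α) * (1 / (2 - α) * s + (1 - α) / (2 - α) * 1) = s + (1 - α) * 1 := by
        field_simp [h2αne]
      rw [e] at h
      exact h
    nlinarith [hA', hB']
  have hdenne : T - 2 * s ≠ 0 := by
    intro h; linarith [hkey]
  -- R and its square root
  have hRT : R = T ^ 2 * (1 + T ^ 2 - 2 * T * s) := by rw [hR, h2, h4, h3]; ring
  have hin0 : (0:ℝ) < 1 + T ^ 2 - 2 * T * s := by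
    nlinarith [mul_pos hT0 (by linarith : (0:ℝ) < T - 2 * s)]
  set r : ℝ := Real.sqrt (1 + T ^ 2 - 2 * T * s) with hr_def
  have hr2 : r ^ 2 = 1 + T ^ 2 - 2 * T * s := Real.sq_sqrt (le_of_lt hin0)
  have hr0 : 0 ≤ r := Real.sqrt_nonneg _
  have hsR : Real.sqrt R = T * r := by
    rw [hRT, Real.sqrt_mul (by positivity), Real.sqrt_sq (le_of_lt hT0), ← hr_def]
  clear_value r
  have hr1 : 1 < r := by
    nlinarith [mul_pos hT0 (by linarith : (0:ℝ) < T - 2 * s)]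
  have hRpos : 0 < R := by rw [hRT]; positivity
  have hdenBne : 2 * T + T ^ 3 - 2 * T ^ 2 * s - 2 * (T * r) ≠ 0 := by
    have hdenB : 2 * T + T ^ 3 - 2 * T ^ 2 * s - 2 * (T * r) = T * (r - 1) ^ 2 := by
      linear_combination (-T) * hr2
    rw [hdenB]
    have : 0 < T * (r - 1) ^ 2 := mul_pos hT0 (pow_pos (by linarith : (0:ℝ) < r - 1) 2)
    linarith
  have ea : a₁ * (T - 2 * s) = 2 * T - 2 * s - T * r := by
    rw [ha, e2T, hsR, div_mul_cancel₀ _ hdenne]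
  have eb : b₁ * (2 * T + T ^ 3 - 2 * T ^ 2 * s - 2 * (T * r))
      = 2 * T - 2 * T ^ 2 * s - (2 - T ^ 2) * (T * r) := by
    rw [hb, e2T, h1α, h2, hT3, hsR, div_mul_cancel₀ _ hdenBne]
  refine ⟨hRpos, hdenne, ?_, ?_⟩
  · rw [hαm1, h4m1]
    apply mul_left_cancel₀ (mul_ne_zero hdenne hdenBne)
    linear_combination (-2*T + 2*T*b₁ + 2*T*r - 2*T*r*b₁ + 2*T^2*s - 2*T^2*s*b₁ + T^3*b₁
        - T^3*r - T^4*s + T^5/2) * ea + (T - T*r - T^2*s + T^3/2) * eb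
  · rw [h2]
    apply mul_left_cancel₀ (mul_ne_zero hdenne hdenBne)
    linear_combination (-2*T + 2*T*b₁ + 2*T*r - 2*T*r*b₁ + 4*T^2*s - 2*T^2*s*b₁ - 2*T^2*s*r
        - T^3 + T^3*b₁ - 2*T^3*s^2 + T^4*s) * ea + (T - T*r - 2*T*s^2 + T^2*s) * eb
      + (2*T^3*s - T^4) * hr2
      + (-4*T^3*s + 4*T^3*s*r + 2*T^4 - 2*T^4*r + 4*T^4*s^2 - 4*T^5*s + T^6) * hsc
end

section
/- Let 0 < α < 1 and define a₃ = 1 + 2^{α/2}·[2 − α + √(2(2 − 2α + α²)·cos²(απ/4))] / [α·cos(απ/4) + (α − 2)·sin(απ/4)] and b₃ = 1 + 2^{α/2}·[2 − α − √(2(2 − 2α + α²)·cos²(απ/4))] / [α·cos(απ/4) + (α − 2)·sin(απ/4)]. Then the denominator α·cos(απ/4) + (α − 2)·sin(απ/4) is nonzero, a₃ < 0, and b₃ > 0. -/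
open Real

set_option maxHeartbeats 1000000

section GammaAux

lemma lemE (α : ℝ) (h0 : 0 < α) (h1 : α < 1) :
    α * Real.cos (α * π / 4) < (2 - α) * Real.sin (α * π / 4) := by
  have hπ := Real.pi_pos
  have hre : α * π / 4 = α * (π / 4) := by ring
  rw [hre]
  set θ := α * (π / 4) with hθ
  have hθ0 : 0 < θ := by positivity
  have hθlt : θ < π / 4 := by rw [hθ]; nlinarith
  set y := π / 2 - θ with hy
  have hy0 : 0 < y := by rw [hy]; nlinarith
  have hθy : θ < y := by rw [hy]; nlinarith
  have hmem0 : (0:ℝ) ∈ Set.Icc (0:ℝ) π := ⟨le_refl 0, hπ.le⟩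
  have hmemy : y ∈ Set.Icc (0:ℝ) π := ⟨hy0.le, by rw [hy]; nlinarith⟩
  have ha : (0:ℝ) < 1 - θ / y := by
    rw [sub_pos]; exact (div_lt_one hy0).2 hθy
  have hb : (0:ℝ) < θ / y := by positivity
  have hab : (1 - θ / y) + θ / y = 1 := by ring
  have h := strictConcaveOn_sin_Icc.2 hmem0 hmemy hy0.ne ha hb hab
  have hc : (1 - θ / y) • (0:ℝ) + (θ / y) • y = θ := by
    simp [smul_eq_mul]; field_simp
  rw [hc] at h
  simp only [smul_eq_mul, Real.sin_zero, mul_zero, zero_add] at h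
  have hsy : Real.sin y = Real.cos θ := by rw [hy, Real.sin_pi_div_two_sub]
  rw [hsy] at h
  -- h : θ / y * cos θ < sin θ
  have h2 : θ * Real.cos θ < y * Real.sin θ := by
    have h3 := (mul_lt_mul_of_pos_left h hy0)
    have h4 : y * (θ / y * Real.cos θ) = θ * Real.cos θ := by field_simp
    rw [h4] at h3; exact h3
  have hyeq : y = (2 - α) * (π / 4) := by rw [hy, hθ]; ring
  rw [hyeq, hθ] at h2
  have h5 : (π/4) * (α * Real.cos θ) < (π/4) * ((2 - α) * Real.sin θ) := by
    rw [hθ]; nlinarith [h2]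
  have h6 : (0:ℝ) < π/4 := by positivity
  exact (mul_lt_mul_iff_right₀ h6).1 h5


lemma fpos (β K l : ℝ) (hb0 : 0 < β) (hb1 : β < 1)
    (hK1 : 0.785 < K) (hK2 : K < 0.786) (hl1 : 0.3465 < l) (hl2 : l < 0.3466) :
    0 < 2*(1 - l*β)*(1+β) - (3-β)*(1+β)*(1 - K*β + (K*β)^3/4)/2
      - (1-β)^2*(1+K*β)/2 := by
  have hK0 : 0 < K := by linarith
  have h2 : K*β < 1 := by nlinarith
  nlinarith [mul_pos hb0 hb0, mul_pos (mul_pos hb0 hb0) hb0,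
    mul_pos hb0 (sub_pos.2 h2), mul_pos (mul_pos hb0 hb0) (sub_pos.2 h2),
    mul_pos hb0 (sub_pos.2 hK2), mul_pos (mul_pos hb0 hb0) (sub_pos.2 hK2),
    mul_pos (mul_pos (mul_pos hb0 hb0) hb0) (sub_pos.2 hK2),
    mul_pos hb0 (sub_pos.2 hl2), mul_pos (mul_pos hb0 hb0) (sub_pos.2 hl2),
    mul_pos hb0 (sub_pos.2 hb1), mul_pos (mul_pos hb0 hb0) (sub_pos.2 hb1),
    mul_pos (mul_pos hb0 (sub_pos.2 hb1)) (sub_pos.2 h2),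
    sq_nonneg (K*β), mul_pos hK0 hb0]

lemma lemM (α : ℝ) (h0 : 0 < α) (h1 : α < 1) :
    0 < 2 * ((2:ℝ)^(α/2)) * (2-α) - (1 + (2:ℝ)^α) * (2-α) * Real.sin (α*π/4)
        - α * ((2:ℝ)^α - 1) * Real.cos (α*π/4) := by
  have hπ := Real.pi_pos
  have hπ1 : π < 3.141593 := Real.pi_lt_d6
  have hπ2 : 3.141592 < π := Real.pi_gt_d6
  have hL1 : Real.log 2 < 0.6931471808 := Real.log_two_lt_d9
  have hL2 : 0.6931471803 < Real.log 2 := Real.log_two_gt_d9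
  obtain ⟨l, hl⟩ : ∃ x:ℝ, x = Real.log 2 / 2 := ⟨_, rfl⟩
  obtain ⟨β, hβ⟩ : ∃ x:ℝ, x = 1 - α := ⟨_, rfl⟩
  have hb0 : 0 < β := by rw [hβ]; linarith
  have hb1 : β < 1 := by rw [hβ]; linarith
  obtain ⟨γ, hγ⟩ : ∃ x:ℝ, x = β * (π/4) := ⟨_, rfl⟩
  have hγ0 : 0 < γ := by rw [hγ]; positivity
  have hγ1 : γ ≤ 1 := by rw [hγ]; nlinarith
  obtain ⟨S, hS⟩ : ∃ x:ℝ, x = Real.sqrt 2 := ⟨_, rfl⟩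
  have hS0 : 0 < S := by rw [hS]; positivity
  have hS2 : S^2 = 2 := by rw [hS]; exact Real.sq_sqrt (by norm_num)
  -- trig rewriting
  have hang : α * π / 4 = π/4 - γ := by rw [hγ, hβ]; ring
  have hsγ : Real.sin (α*π/4) = S/2 * (Real.cos γ - Real.sin γ) := by
    rw [hang, Real.sin_sub, Real.sin_pi_div_four, Real.cos_pi_div_four]; rw [hS]; ring
  have hcγ : Real.cos (α*π/4) = S/2 * (Real.cos γ + Real.sin γ) := by
    rw [hang, Real.cos_sub, Real.sin_pi_div_four, Real.cos_pi_div_four]; rw [hS]; ring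
  have hsinlt : Real.sin γ < γ := Real.sin_lt hγ0
  have hsingt : γ - γ^3/4 < Real.sin γ := by
    have := Real.sin_gt_sub_cube hγ0; nlinarith [pow_pos hγ0 3]
  have hcosle : Real.cos γ ≤ 1 := Real.cos_le_one γ
  -- s, c bounds
  have hs0 : 0 ≤ Real.sin (α*π/4) := by
    apply Real.sin_nonneg_of_nonneg_of_le_pi <;> nlinarith
  have hc0 : 0 ≤ Real.cos (α*π/4) := by
    apply Real.cos_nonneg_of_mem_Icc
    constructor <;> [nlinarith; nlinarith]
  have hsU : Real.sin (α*π/4) ≤ S/2 * (1 - γ + γ^3/4) := by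
    rw [hsγ]; nlinarith
  have hcU : Real.cos (α*π/4) ≤ S/2 * (1 + γ) := by
    rw [hcγ]; nlinarith
  -- q = 2^α bounds
  have hqdef : (2:ℝ)^α = Real.exp (Real.log 2 * α) := Real.rpow_def_of_pos (by norm_num) α
  have hq0 : 1 ≤ (2:ℝ)^α := by
    rw [hqdef]; exact Real.one_le_exp (by positivity)
  have hq1 : (2:ℝ)^α ≤ 1 + α := by
    have h := convexOn_exp.2 (Set.mem_univ (0:ℝ)) (Set.mem_univ (Real.log 2))
      (by linarith : (0:ℝ) ≤ 1 - α) h0.le (by ring)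
    simp only [smul_eq_mul, mul_zero, zero_add, Real.exp_zero, Real.exp_log two_pos] at h
    rw [hqdef, mul_comm]; linarith
  -- p = 2^(α/2) lower bound
  have hSexp : S = Real.exp l := by
    rw [hS, show (2:ℝ) = Real.exp l * Real.exp l by
      rw [← Real.exp_add, hl]; rw [show Real.log 2 / 2 + Real.log 2 / 2 = Real.log 2 by ring,
        Real.exp_log two_pos]]
    exact Real.sqrt_mul_self (Real.exp_pos _).le
  have hpdef : (2:ℝ)^(α/2) = Real.exp (l * α) := by
    rw [Real.rpow_def_of_pos (by norm_num), hl]; ring_nf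
  have hp : S * (1 - l*β) ≤ (2:ℝ)^(α/2) := by
    have h := Real.add_one_le_exp (l*(α-1))
    have h2 := mul_le_mul_of_nonneg_left h (Real.exp_pos l).le
    rw [← Real.exp_add] at h2
    have h3 : l + l*(α-1) = l*α := by ring
    rw [h3] at h2
    rw [hpdef, hSexp, hβ]; nlinarith [h2]
  -- numeric bound on l
  have hl1 : 0.3465 < l := by rw [hl]; linarith
  have hl2 : l < 0.3466 := by rw [hl]; linarith
  -- polynomial core
  have hK1 : (0.785:ℝ) < π/4 := by linarith
  have hK2 : π/4 < 0.786 := by linarith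
  have hfγ : 0 < 2*(1-l*β)*(1+β) - (3-β)*(1+β)*(1 - γ + γ^3/4)/2 - (1-β)^2*(1+γ)/2 := by
    have h := fpos β (π/4) l hb0 hb1 hK1 hK2 hl1 hl2
    rw [hγ]; nlinarith [h]
  -- assemble
  have hA : 2*(S*(1-l*β))*(1+β) ≤ 2*((2:ℝ)^(α/2))*(2-α) := by
    have h := mul_le_mul_of_nonneg_left hp (show (0:ℝ) ≤ 2*(1+β) by linarith)
    rw [hβ] at *; nlinarith [h]
  have h1q : 1 + (2:ℝ)^α ≤ 3 - β := by rw [hβ]; linarith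
  have hsU' : (2-α)*Real.sin (α*π/4) ≤ (1+β)*(S/2 * (1 - γ + γ^3/4)) := by
    have h := mul_le_mul_of_nonneg_left hsU (show (0:ℝ) ≤ 1+β by linarith)
    rw [hβ] at *; nlinarith [h]
  have hB : (1 + (2:ℝ)^α)*((2-α)*Real.sin (α*π/4)) ≤ (3-β)*((1+β)*(S/2 * (1 - γ + γ^3/4))) :=
    mul_le_mul h1q hsU' (mul_nonneg (by linarith) hs0) (by linarith)
  have hcU' : ((2:ℝ)^α - 1)*Real.cos (α*π/4) ≤ (1-β)*(S/2*(1+γ)) :=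
    mul_le_mul (by rw [hβ]; linarith) hcU hc0 (by linarith)
  have hC : α*(((2:ℝ)^α - 1)*Real.cos (α*π/4)) ≤ (1-β)*((1-β)*(S/2*(1+γ))) := by
    have h := mul_le_mul_of_nonneg_left hcU' h0.le
    rw [hβ] at *; nlinarith [h]
  nlinarith [mul_pos hS0 hfγ, hA, hB, hC]

end GammaAux

/-- Properties of the intersection point `(a₃, b₃)` of the boundary curves Γ₂ and Γ₃:
the common denominator is nonzero, `a₃ < 0` and `0 < b₃`. -/

theorem Gamma2_Gamma3_intersection_signs (α : ℝ) (h0 : 0 < α) (h1 : α < 1)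
    (a₃ b₃ : ℝ)
    (ha : a₃ = 1 + (2 : ℝ) ^ (α / 2) *
        ((2 - α + Real.sqrt (2 * (2 - 2 * α + α ^ 2) * (Real.cos (α * π / 4)) ^ 2)) /
          (α * Real.cos (α * π / 4) + (α - 2) * Real.sin (α * π / 4))))
    (hb : b₃ = 1 + (2 : ℝ) ^ (α / 2) *
        ((2 - α - Real.sqrt (2 * (2 - 2 * α + α ^ 2) * (Real.cos (α * π / 4)) ^ 2)) /
          (α * Real.cos (α * π / 4) + (α - 2) * Real.sin (α * π / 4)))) :
    α * Real.cos (α * π / 4) + (α - 2) * Real.sin (α * π / 4) ≠ 0 ∧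
    a₃ < 0 ∧ 0 < b₃ := by
  have hπ := Real.pi_pos
  obtain ⟨s, hsdef⟩ : ∃ x:ℝ, x = Real.sin (α * π / 4) := ⟨_, rfl⟩
  obtain ⟨c, hcdef⟩ : ∃ x:ℝ, x = Real.cos (α * π / 4) := ⟨_, rfl⟩
  obtain ⟨p, hpdef⟩ : ∃ x:ℝ, x = (2:ℝ) ^ (α/2) := ⟨_, rfl⟩
  rw [← hsdef, ← hcdef] at ha hb ⊢
  rw [← hpdef] at ha hb
  obtain ⟨R, hRdef⟩ : ∃ x:ℝ, x = Real.sqrt (2 * (2 - 2 * α + α ^ 2) * c ^ 2) := ⟨_, rfl⟩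
  rw [← hRdef] at ha hb
  have hE := lemE α h0 h1
  rw [← hsdef, ← hcdef] at hE
  have hEpos : 0 < (2 - α) * s - α * c := by linarith
  obtain ⟨E, hEdef⟩ : ∃ x:ℝ, x = (2 - α) * s - α * c := ⟨_, rfl⟩
  rw [← hEdef] at hEpos
  have hsc : s ^ 2 + c ^ 2 = 1 := by rw [hsdef, hcdef]; exact Real.sin_sq_add_cos_sq _
  have hs0 : 0 ≤ s := by
    rw [hsdef]; apply Real.sin_nonneg_of_nonneg_of_le_pi <;> nlinarith
  have hc0 : 0 ≤ c := by
    rw [hcdef]; apply Real.cos_nonneg_of_mem_Icc; constructor <;> nlinarith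
  have hslt : s < 1 := by
    rw [hsdef]
    calc Real.sin (α * π / 4) < α * π / 4 := Real.sin_lt (by positivity)
    _ < 1 := by nlinarith [Real.pi_lt_d2]
  have hcge : Real.sqrt 2 / 2 ≤ c := by
    rw [hcdef, ← Real.cos_pi_div_four]
    apply Real.cos_le_cos_of_nonneg_of_le_pi (by positivity) (by nlinarith) (by nlinarith)
  have hc2 : (1:ℝ)/2 ≤ c ^ 2 := by
    nlinarith [Real.sq_sqrt (show (0:ℝ) ≤ 2 by norm_num), Real.sqrt_nonneg 2]
  have hR0 : 0 ≤ R := hRdef ▸ Real.sqrt_nonneg _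
  have hR2 : R ^ 2 = 2 * (2 - 2 * α + α ^ 2) * c ^ 2 := by
    rw [hRdef]; exact Real.sq_sqrt (by nlinarith [sq_nonneg (1 - α), sq_nonneg c])
  have hR1 : 1 ≤ R := by nlinarith [sq_nonneg (1 - α)]
  have hp1 : 1 ≤ p := by
    rw [hpdef, Real.rpow_def_of_pos two_pos]
    exact Real.one_le_exp (mul_nonneg (Real.log_nonneg one_le_two) (by linarith))
  have hq2 : p ^ 2 = (2:ℝ) ^ α := by
    rw [hpdef, sq, ← Real.rpow_add two_pos]
    norm_num
  have hM := lemM α h0 h1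
  rw [← hsdef, ← hcdef, ← hpdef] at hM
  have hM' : 0 < 2 * p * (2 - α) - (1 + p ^ 2) * (2 - α) * s - α * (p ^ 2 - 1) * c := by
    rw [hq2]; exact hM
  -- G > 0
  have hElt : E < 2 := by rw [hEdef]; nlinarith
  have hG : 0 < p * R + p * (2 - α) - E := by
    nlinarith [mul_le_mul_of_nonneg_right hp1 hR0,
      mul_le_mul_of_nonneg_right hp1 (show (0:ℝ) ≤ 2 - α by linarith)]
  -- key identity
  have hkey : (p * R - (p * (2 - α) - E)) * (p * R + p * (2 - α) - E) =
      E * (2 * p * (2 - α) - (1 + p ^ 2) * (2 - α) * s - α * (p ^ 2 - 1) * c) := by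
    rw [hEdef]
    linear_combination p ^ 2 * hR2 + p ^ 2 * (2 - α) ^ 2 * hsc
  have hF : 0 < p * R - (p * (2 - α) - E) := by
    nlinarith [hkey, hG, mul_pos hEpos hM']
  -- denominator
  have hDval : α * c + (α - 2) * s = -E := by rw [hEdef]; ring
  have hDne : α * c + (α - 2) * s ≠ 0 := by rw [hDval]; intro h; nlinarith
  refine ⟨hDne, ?_, ?_⟩
  · rw [ha, hDval, div_neg]
    have h2 : 1 < p * ((2 - α + R) / E) := by
      rw [mul_div_assoc'] at *
      exact (one_lt_div hEpos).2 (by nlinarith)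
    linarith
  · rw [hb, hDval, div_neg]
    have h2 : p * ((2 - α - R) / E) < 1 := by
      rw [mul_div_assoc'] at *
      exact (div_lt_one hEpos).2 (by nlinarith)
    linarith
end
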